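/- Suppose (2 + θ)·C/(C - V_L) < R0 < (2 + θ)·C/(C - V_H), and let x* := (1 + θ)/(2 + θ), n* := -(C·(2 + θ - R0) + R0·V_L)/(R0·(V_H - V_L)). Then G is differentiable at (x*, n*) and its Jacobian matrix there equals [[-(1 + θ)·C/R0, -(1 + θ)(V_H - V_L)/(2 + θ)²], [(2 + θ)(C(2 + θ - R0) + R0·V_H)(C(2 + θ - R0) + R0·V_L)/(R0²·(V_H - V_L)²), 0]], and the determinant of this matrix, which equals (1 + θ)(C(2 + θ - R0) + R0·V_H)(C(2 + θ - R0) + R0·V_L)/((2 + θ)·R0²·(V_H - V_L)), is strictly negative; hence (x*, n*) is a saddle point. -/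

import Mathlib

set_option maxHeartbeats 1000000

theorem stmt_6 (C V_H V_L θ R0 : ℝ)
    (hCH : C > V_H) (hHL : V_H > V_L) (hL : V_L > 0) (hθ : θ > 0) (hR0 : R0 > 1)
    (V : ℝ → ℝ) (hV : ∀ n, V n = n * V_H + (1 - n) * V_L)
    (f : ℝ → ℝ)
    (hf1 : ∀ x : ℝ, x < 1 - 1 / R0 → f x = 1 - 1 / (R0 * (1 - x)))
    (hf2 : ∀ x : ℝ, x ≥ 1 - 1 / R0 → f x = 0)
    (G : ℝ × ℝ → ℝ × ℝ)
    (hG : ∀ p : ℝ × ℝ, G p = (p.1 * (1 - p.1) * (f p.1 * C - V p.2),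
        p.2 * (1 - p.2) * (-p.1 + (1 + θ) * (1 - p.1))))
    (hRlo : (2 + θ) * C / (C - V_L) < R0) (hRhi : R0 < (2 + θ) * C / (C - V_H))
    (xs ns J11 J12 J21 D : ℝ)
    (hxs : xs = (1 + θ) / (2 + θ))
    (hns : ns = -(C * (2 + θ - R0) + R0 * V_L) / (R0 * (V_H - V_L)))
    (hJ11 : J11 = -(1 + θ) * C / R0)
    (hJ12 : J12 = -(1 + θ) * (V_H - V_L) / (2 + θ) ^ 2)
    (hJ21 : J21 = (2 + θ) * (C * (2 + θ - R0) + R0 * V_H) * (C * (2 + θ - R0) + R0 * V_L) /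
        (R0 ^ 2 * (V_H - V_L) ^ 2))
    (hD : D = (1 + θ) * (C * (2 + θ - R0) + R0 * V_H) * (C * (2 + θ - R0) + R0 * V_L) /
        ((2 + θ) * R0 ^ 2 * (V_H - V_L))) :
    DifferentiableAt ℝ G (xs, ns) ∧
    fderiv ℝ G (xs, ns) (1, 0) = (J11, J21) ∧
    fderiv ℝ G (xs, ns) (0, 1) = (J12, 0) ∧
    J11 * 0 - J12 * J21 = D ∧
    D < 0 := by
  have hθ2 : (0:ℝ) < 2 + θ := by linarith
  have hθ2' : (2:ℝ) + θ ≠ 0 := ne_of_gt hθ2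
  have hR0p : (0:ℝ) < R0 := by linarith
  have hR0' : R0 ≠ 0 := ne_of_gt hR0p
  have hΔ : (0:ℝ) < V_H - V_L := by linarith
  have hΔ' : V_H - V_L ≠ 0 := ne_of_gt hΔ
  have hCL : (0:ℝ) < C - V_L := by linarith
  have hCHp : (0:ℝ) < C - V_H := by linarith
  -- sign facts
  have hNH : 0 < C * (2 + θ - R0) + R0 * V_H := by
    have := (lt_div_iff₀ hCHp).mp hRhi
    nlinarith
  have hNL : C * (2 + θ - R0) + R0 * V_L < 0 := by
    have := (div_lt_iff₀ hCL).mp hRlo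
    nlinarith
  -- R0 > 2 + θ
  have hR2 : 2 + θ < R0 := by
    have h : (2 + θ) < (2 + θ) * C / (C - V_L) := by
      rw [lt_div_iff₀ hCL]
      nlinarith
    linarith
  -- xs < 1 - 1/R0
  have hxlt : xs < 1 - 1 / R0 := by
    rw [hxs]
    have h1 : 1 / R0 < 1 / (2 + θ) := by
      apply one_div_lt_one_div_of_lt hθ2 hR2
    have h2 : (1 + θ) / (2 + θ) = 1 - 1 / (2 + θ) := by
      field_simp
      ring
    rw [h2]; linarith
  -- The smooth model H
  set H : ℝ × ℝ → ℝ × ℝ := fun p =>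
    (p.1 * (1 - p.1) * (C - (p.2 * V_H + (1 - p.2) * V_L)) - p.1 * (C / R0),
     p.2 * (1 - p.2) * ((1 + θ) - (2 + θ) * p.1)) with hHdef
  -- G = H eventually near (xs, ns)
  have hEq : G =ᶠ[nhds (xs, ns)] H := by
    have hopen : IsOpen {p : ℝ × ℝ | p.1 < 1 - 1 / R0} :=
      isOpen_lt continuous_fst continuous_const
    have hmem : (xs, ns) ∈ {p : ℝ × ℝ | p.1 < 1 - 1 / R0} := hxlt
    filter_upwards [hopen.mem_nhds hmem] with p hp
    have hp1 : p.1 < 1 - 1 / R0 := hp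
    have hne : (1 : ℝ) - p.1 ≠ 0 := by
      have : 1 / R0 > 0 := by positivity
      have : p.1 < 1 := by linarith
      linarith
    rw [hG p, hf1 p.1 hp1, hV p.2, hHdef]
    simp only [Prod.mk.injEq]
    constructor
    · field_simp
      ring
    · ring
  -- derivative of H
  have h1 : HasFDerivAt (fun p : ℝ × ℝ => p.1) (ContinuousLinearMap.fst ℝ ℝ ℝ) (xs, ns) :=
    hasFDerivAt_fst
  have h2 : HasFDerivAt (fun p : ℝ × ℝ => p.2) (ContinuousLinearMap.snd ℝ ℝ ℝ) (xs, ns) :=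
    hasFDerivAt_snd
  have hA := ((h1.mul (h1.const_sub 1)).mul
      (((h2.mul_const V_H).add ((h2.const_sub 1).mul_const V_L)).const_sub C)).sub
      (h1.mul_const (C / R0))
  have hB := (h2.mul (h2.const_sub 1)).mul ((h1.const_mul (2 + θ)).const_sub (1 + θ))
  have hH : HasFDerivAt H _ (xs, ns) := hA.prodMk hB
  have hdiff : DifferentiableAt ℝ H (xs, ns) := hH.differentiableAt
  have hdG : DifferentiableAt ℝ G (xs, ns) :=
    (Filter.EventuallyEq.differentiableAt_iff hEq).mpr hdiff
  have hfd : fderiv ℝ G (xs, ns) = _ := hEq.fderiv_eq.trans hH.fderiv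
  -- value of V at ns
  refine ⟨hdG, ?_, ?_, ?_, ?_⟩
  · rw [hfd]
    simp only [ContinuousLinearMap.prod_apply, ContinuousLinearMap.add_apply,
      ContinuousLinearMap.sub_apply, ContinuousLinearMap.smul_apply,
      ContinuousLinearMap.coe_fst', ContinuousLinearMap.coe_snd',
      ContinuousLinearMap.neg_apply, ContinuousLinearMap.coe_smul',
      Pi.smul_apply, smul_eq_mul, Prod.mk.injEq, Pi.mul_apply, Pi.add_apply]
    constructor
    · rw [hJ11, hxs, hns]
      field_simp
      ring
    · rw [hJ21, hxs, hns]
      field_simp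
      ring
  · rw [hfd]
    simp only [ContinuousLinearMap.prod_apply, ContinuousLinearMap.add_apply,
      ContinuousLinearMap.sub_apply, ContinuousLinearMap.smul_apply,
      ContinuousLinearMap.coe_fst', ContinuousLinearMap.coe_snd',
      ContinuousLinearMap.neg_apply, ContinuousLinearMap.coe_smul',
      Pi.smul_apply, smul_eq_mul, Prod.mk.injEq, Pi.mul_apply, Pi.add_apply]
    constructor
    · rw [hJ12, hxs, hns]
      field_simp
      ring
    · rw [hxs, hns]
      field_simp
      ring
  · rw [hJ11, hJ12, hJ21, hD]
    field_simp
    ring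
  · rw [hD]
    apply div_neg_of_neg_of_pos
    · exact mul_neg_of_pos_of_neg (mul_pos (by linarith : (0:ℝ) < 1 + θ) hNH) hNL
    · positivity
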